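/- Let M ⊆ N be finite dimensional semisimple Q-algebras, E/Q a field extension, and i_E : N ⊗_Q E → End_E(V) a faithful representation on a finite dimensional E-vector space V. Let u be an idempotent of N and w an element of M ⊗_Q E with i_E(w)·V ⊆ i_E(u)·V. Then there exists an idempotent v ∈ M with i_E(w)·V ⊆ i_E(v)·V ⊆ i_E(u)·V. -/

import Mathlib

open TensorProduct


lemma vnr {R : Type} [Ring R] [IsSemisimpleRing R] (a : R) :
    ∃ s : R, a * s * a = a := by
  obtain ⟨e, he, hspan⟩ := IsSemisimpleRing.ideal_eq_span_idempotent (Ideal.span {a})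
  have ha : a ∈ Ideal.span {e} := hspan ▸ Submodule.mem_span_singleton_self a
  have heA : e ∈ Ideal.span {a} := hspan ▸ Submodule.mem_span_singleton_self e
  obtain ⟨r, hr⟩ := Submodule.mem_span_singleton.mp ha
  obtain ⟨s, hs⟩ := Submodule.mem_span_singleton.mp heA
  rw [smul_eq_mul] at hr hs
  refine ⟨s, ?_⟩
  calc a * s * a = r * e * (s * a) := by rw [hr, mul_assoc]
    _ = r * (e * e) := by rw [hs, mul_assoc]
    _ = a := by rw [he, hr]

lemma combine_idem {R : Type} [Ring R] {g k : R} (hg : g * g = g) (hk : k * k = k)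
    (hgk : g * k = 0) : (g + k - k * g) * (g + k - k * g) = g + k - k * g := by
  have expand : (g + k - k * g) * (g + k - k * g) =
      g * g + g * k - g * (k * g) + (k * g + k * k - k * (k * g))
        - (k * (g * g) + k * (g * k) - k * (g * (k * g))) := by noncomm_ring
  rw [expand, hg, hgk, ← mul_assoc g k g, hgk, hk, ← mul_assoc k k g, hk]
  simp only [mul_zero, zero_mul]
  abel

open MulOpposite in
lemma right_ideal_idem {R : Type} [Ring R] [IsSemisimpleRing R] (l : List R) :
    ∃ v : R, IsIdempotentElem v ∧ (∀ a ∈ l, v * a = a) ∧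
      v ∈ Submodule.span Rᵐᵒᵖ {x | x ∈ l} := by
  induction l with
  | nil => exact ⟨0, IsIdempotentElem.zero, by simp, Submodule.zero_mem _⟩
  | cons a l ih =>
    obtain ⟨v₀, hv₀, hfix, hmem⟩ := ih
    obtain ⟨s, hsa⟩ := vnr a
    obtain ⟨g, hg_def⟩ : ∃ g : R, g = a * s := ⟨_, rfl⟩
    have hg : g * g = g := by rw [hg_def, ← mul_assoc, hsa]
    have hga : g * a = a := by rw [hg_def, hsa]
    obtain ⟨h, hh_def⟩ : ∃ h : R, h = v₀ - g * v₀ := ⟨_, rfl⟩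
    have hgh : g * h = 0 := by rw [hh_def, mul_sub, ← mul_assoc, hg, sub_self]
    obtain ⟨t, hth⟩ := vnr h
    obtain ⟨k, hk_def⟩ : ∃ k : R, k = h * t := ⟨_, rfl⟩
    have hk : k * k = k := by rw [hk_def, ← mul_assoc, hth]
    have hkh : k * h = h := by rw [hk_def, hth]
    have hgk : g * k = 0 := by rw [hk_def, ← mul_assoc, hgh, zero_mul]
    refine ⟨g + k - k * g, combine_idem hg hk hgk, ?_, ?_⟩
    · have hpa : (g + k - k * g) * a = a := by
        rw [sub_mul, add_mul, hga, mul_assoc, hga]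
        abel
      have hpv : (g + k - k * g) * v₀ = v₀ := by
        have h1 : k * v₀ - k * (g * v₀) = v₀ - g * v₀ := by
          rw [← mul_sub, ← hh_def, hkh, hh_def]
        have h2 : (g + k - k * g) * v₀ = g * v₀ + (k * v₀ - k * (g * v₀)) := by
          rw [sub_mul, add_mul, mul_assoc]; abel
        rw [h2, h1]; abel
      rintro b hb
      rcases List.mem_cons.mp hb with rfl | hb
      · exact hpa
      · calc (g + k - k * g) * b = (g + k - k * g) * (v₀ * b) := by rw [hfix b hb]
          _ = ((g + k - k * g) * v₀) * b := by rw [mul_assoc]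
          _ = b := by rw [hpv, hfix b hb]
    · have hset : {x | x ∈ l} ⊆ {x | x ∈ a :: l} := fun x hx => List.mem_cons_of_mem a hx
      have haM : a ∈ Submodule.span Rᵐᵒᵖ {x | x ∈ a :: l} :=
        Submodule.subset_span List.mem_cons_self
      have hgM : g ∈ Submodule.span Rᵐᵒᵖ {x | x ∈ a :: l} := by
        rw [hg_def, ← op_smul_eq_mul]; exact Submodule.smul_mem _ _ haM
      have hvM : v₀ ∈ Submodule.span Rᵐᵒᵖ {x | x ∈ a :: l} :=
        Submodule.span_mono hset hmem
      have hhM : h ∈ Submodule.span Rᵐᵒᵖ {x | x ∈ a :: l} := by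
        rw [hh_def, ← op_smul_eq_mul]
        exact Submodule.sub_mem _ hvM (Submodule.smul_mem _ _ hgM)
      have hkM : k ∈ Submodule.span Rᵐᵒᵖ {x | x ∈ a :: l} := by
        rw [hk_def, ← op_smul_eq_mul]; exact Submodule.smul_mem _ _ hhM
      have hkgM : k * g ∈ Submodule.span Rᵐᵒᵖ {x | x ∈ a :: l} := by
        rw [← op_smul_eq_mul]; exact Submodule.smul_mem _ _ hkM
      exact Submodule.sub_mem _ (Submodule.add_mem _ hgM hkM) hkgM


/-- idempotent interpolation lemma.  Let `M ⊆ N` be finite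
dimensional semisimple `ℚ`-algebras (the inclusion being an injective `ℚ`-algebra
map `f`), `E/ℚ` a field extension, and `i : N ⊗_ℚ E → End_E(V)` a faithful
representation on a finite dimensional `E`-vector space `V` (here written with the
tensor factors as `E ⊗[ℚ] N`).  Let `u` be an idempotent of `N` and `w` an element
of `M ⊗_ℚ E` with `i(w)·V ⊆ i(u)·V`.  Then there exists an idempotent `v ∈ M` with
`i(w)·V ⊆ i(v)·V ⊆ i(u)·V`. -/
theorem idempotent_interpolation
    (M N : Type) [Ring M] [Ring N] [Algebra ℚ M] [Algebra ℚ N]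
    [FiniteDimensional ℚ M] [FiniteDimensional ℚ N]
    [IsSemisimpleRing M] [IsSemisimpleRing N]
    (f : M →ₐ[ℚ] N) (hf : Function.Injective f)
    (E : Type) [Field E] [Algebra ℚ E]
    (V : Type) [AddCommGroup V] [Module E V] [FiniteDimensional E V]
    (i : (E ⊗[ℚ] N) →ₐ[E] Module.End E V) (hi : Function.Injective i)
    (u : N) (hu : IsIdempotentElem u)
    (w : E ⊗[ℚ] M)
    (hw : LinearMap.range (i (Algebra.TensorProduct.map (AlgHom.id ℚ E) f w)) ≤
          LinearMap.range (i ((1 : E) ⊗ₜ[ℚ] u))) :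
    ∃ v : M, IsIdempotentElem v ∧
      LinearMap.range (i (Algebra.TensorProduct.map (AlgHom.id ℚ E) f w)) ≤
        LinearMap.range (i ((1 : E) ⊗ₜ[ℚ] f v)) ∧
      LinearMap.range (i ((1 : E) ⊗ₜ[ℚ] f v)) ≤
        LinearMap.range (i ((1 : E) ⊗ₜ[ℚ] u)) := by
  classical
  -- abbreviation
  have hrange : ∀ x y : E ⊗[ℚ] N, IsIdempotentElem x →
      LinearMap.range (i y) ≤ LinearMap.range (i x) → x * y = y := by
    intro x y hx hle
    apply hi
    rw [map_mul]
    apply LinearMap.ext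
    intro z
    obtain ⟨z', hz'⟩ := hle (LinearMap.mem_range_self (i y) z)
    have hxx : i x * i x = i x := by rw [← map_mul, hx]
    calc (i x * i y) z = i x (i x z') := by rw [Module.End.mul_apply, hz']
      _ = (i x * i x) z' := by rw [Module.End.mul_apply]
      _ = i x z' := by rw [hxx]
      _ = i y z := hz'
  have hrange' : ∀ x y : E ⊗[ℚ] N, x * y = y →
      LinearMap.range (i y) ≤ LinearMap.range (i x) := by
    intro x y hxy
    rintro _ ⟨z, rfl⟩
    refine ⟨i y z, ?_⟩
    conv_rhs => rw [← hxy]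
    rw [map_mul, Module.End.mul_apply]
  have he : IsIdempotentElem ((1 : E) ⊗ₜ[ℚ] u : E ⊗[ℚ] N) := by
    show _ * _ = _
    rw [Algebra.TensorProduct.tmul_mul_tmul, one_mul, hu]
  have step1 : ((1 : E) ⊗ₜ[ℚ] u) * Algebra.TensorProduct.map (AlgHom.id ℚ E) f w =
      Algebra.TensorProduct.map (AlgHom.id ℚ E) f w := hrange _ _ he hw
  -- the linear map m ↦ f m - u * f m
  set g : M →ₗ[ℚ] N := f.toLinearMap - (LinearMap.mulLeft ℚ u).comp f.toLinearMap with hg_def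
  have hg_apply : ∀ m : M, g m = f m - u * f m := fun m => rfl
  have hbc : ∀ x : E ⊗[ℚ] M, LinearMap.lTensor E g x =
      Algebra.TensorProduct.map (AlgHom.id ℚ E) f x -
        ((1 : E) ⊗ₜ[ℚ] u) * Algebra.TensorProduct.map (AlgHom.id ℚ E) f x := by
    intro x
    induction x using TensorProduct.induction_on with
    | zero => simp
    | tmul c m =>
        rw [LinearMap.lTensor_tmul, Algebra.TensorProduct.map_tmul, hg_apply,
          TensorProduct.tmul_sub, Algebra.TensorProduct.tmul_mul_tmul, one_mul]
        rfl
    | add x y hx hy =>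
        rw [map_add, map_add, hx, hy, mul_add]
        abel
  have hker : LinearMap.lTensor E g w = 0 := by
    rw [hbc, step1, sub_self]
  have hex := Module.Flat.lTensor_exact (R := ℚ) E (LinearMap.exact_subtype_ker_map g)
  obtain ⟨y, hy⟩ := (hex w).mp hker
  -- generators of ker g
  obtain ⟨S, hS⟩ := IsNoetherian.noetherian (LinearMap.ker g)
  obtain ⟨v, hvidem, hvfix, hvmem⟩ := right_ideal_idem S.toList
  -- v ∈ ker g
  have hK' : ∀ m ∈ LinearMap.ker g, u * f m = f m := by
    intro m hm
    have := LinearMap.mem_ker.mp hm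
    rw [hg_apply, sub_eq_zero] at this
    exact this.symm
  let K' : Submodule Mᵐᵒᵖ M :=
    { carrier := {m | u * f m = f m}
      add_mem' := by
        intro x y hx hy
        simp only [Set.mem_setOf_eq, map_add, mul_add] at *
        rw [hx, hy]
      zero_mem' := by simp
      smul_mem' := by
        intro c x hx
        simp only [Set.mem_setOf_eq] at *
        have : c • x = x * c.unop := rfl
        rw [this, map_mul, ← mul_assoc, hx] }
  have hvK : u * f v = f v := by
    have hsub : {x | x ∈ S.toList} ⊆ (K' : Set M) := by
      intro a ha
      have haK : a ∈ LinearMap.ker g := hS ▸ Submodule.subset_span (by simpa using ha)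
      exact hK' a haK
    exact (Submodule.span_le.mpr hsub) hvmem
  have hfixK : ∀ m ∈ LinearMap.ker g, v * m = m := by
    have hle : LinearMap.ker g ≤ LinearMap.ker (LinearMap.mulLeft ℚ v - LinearMap.id) := by
      rw [← hS]
      apply Submodule.span_le.mpr
      intro a ha
      simp only [SetLike.mem_coe, LinearMap.mem_ker, LinearMap.sub_apply,
        LinearMap.mulLeft_apply, LinearMap.id_apply]
      rw [hvfix a (by simpa using ha), sub_self]
    intro m hm
    have := hle hm
    simp only [LinearMap.mem_ker, LinearMap.sub_apply, LinearMap.mulLeft_apply,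
      LinearMap.id_apply, sub_eq_zero] at this
    exact this
  have hfixT : ∀ z : E ⊗[ℚ] (LinearMap.ker g),
      ((1 : E) ⊗ₜ[ℚ] v) * LinearMap.lTensor E (LinearMap.ker g).subtype z =
        LinearMap.lTensor E (LinearMap.ker g).subtype z := by
    intro z
    induction z using TensorProduct.induction_on with
    | zero => simp
    | tmul c m =>
        rw [LinearMap.lTensor_tmul, Submodule.coe_subtype,
          Algebra.TensorProduct.tmul_mul_tmul, one_mul, hfixK m m.2]
    | add x y hx hy' =>
        rw [map_add, mul_add, hx, hy']
  have hvw : ((1 : E) ⊗ₜ[ℚ] v) * w = w := by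
    rw [← hy]; exact hfixT y
  refine ⟨v, hvidem, ?_, ?_⟩
  · apply hrange'
    have h1 : ((1 : E) ⊗ₜ[ℚ] f v : E ⊗[ℚ] N) =
        Algebra.TensorProduct.map (AlgHom.id ℚ E) f ((1 : E) ⊗ₜ[ℚ] v) := by
      rw [Algebra.TensorProduct.map_tmul]
      rfl
    rw [h1, ← map_mul, hvw]
  · apply hrange'
    rw [Algebra.TensorProduct.tmul_mul_tmul, one_mul, hvK]
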